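/- Let u¹, u² : ℝ → ℝ be smooth with u²(x) > 0 for all x, and set v¹ = u² − u¹, v² = log u². Define differential operators on pairs ξ = (ξ₁, ξ₂) of smooth functions by 𝒫₂;₀(ξ) = ( u¹(u²ξ₂)′, u²(u¹ξ₁)′ + 2u²(u²ξ₂)′ ), K(ξ) = (−ξ₁ + ξ₂, ξ₂/u²), and Kᵀ(ξ) = (−ξ₁, ξ₁ + ξ₂/u²). Then for every pair ξ, (K ∘ 𝒫₂;₀ ∘ Kᵀ)(ξ) = ( 2v¹e^{v²}ξ₁′ + (v¹e^{v²})′ξ₁ + (v¹ + e^{v²})ξ₂′, (v¹ + e^{v²})ξ₁′ + (v¹ + e^{v²})′ξ₁ + 2ξ₂′ ). That is, under the change of variables v¹ = u² − u¹, v² = log u², the dispersionless limit 𝒫₂;₀ of the second Hamiltonian operator of the Ablowitz–Ladik hierarchy becomes the hydrodynamic operator induced by the intersection form g = [[2v¹e^{v²}, v¹ + e^{v²}],[v¹ + e^{v²}, 2]] of the generalized Frobenius manifold with potential F = ½(v¹)²v² + v¹e^{v²} + ½(v¹)²log v¹. -/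

import Mathlib

/-- The dispersionless limit of the second Hamiltonian operator of the Ablowitz–Ladik
hierarchy, `𝒫₂;₀(ξ) = ( u¹(u²ξ₂)′, u²(u¹ξ₁)′ + 2u²(u²ξ₂)′ )`. -/
noncomputable def P20 (u1 u2 : ℝ → ℝ) (ξ : (ℝ → ℝ) × (ℝ → ℝ)) : (ℝ → ℝ) × (ℝ → ℝ) :=
  (fun x => u1 x * deriv (fun y => u2 y * ξ.2 y) x,
   fun x => u2 x * deriv (fun y => u1 y * ξ.1 y) x
      + 2 * u2 x * deriv (fun y => u2 y * ξ.2 y) x)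

/-- The Jacobian `K(ξ) = (−ξ₁ + ξ₂, ξ₂/u²)` of the change of variables
`v¹ = u² − u¹`, `v² = log u²`. -/
noncomputable def Kop (u2 : ℝ → ℝ) (ξ : (ℝ → ℝ) × (ℝ → ℝ)) : (ℝ → ℝ) × (ℝ → ℝ) :=
  (fun x => -ξ.1 x + ξ.2 x, fun x => ξ.2 x / u2 x)

/-- The transpose Jacobian `Kᵀ(ξ) = (−ξ₁, ξ₁ + ξ₂/u²)`. -/
noncomputable def KopT (u2 : ℝ → ℝ) (ξ : (ℝ → ℝ) × (ℝ → ℝ)) : (ℝ → ℝ) × (ℝ → ℝ) :=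
  (fun x => -ξ.1 x, fun x => ξ.1 x + ξ.2 x / u2 x)

/-- Under the change of variables `v¹ = u² − u¹`, `v² = log u²`, the
dispersionless limit `𝒫₂;₀` of the second Hamiltonian operator of the Ablowitz–Ladik
hierarchy becomes the hydrodynamic operator induced by the intersection form
`g = [[2v¹e^{v²}, v¹ + e^{v²}],[v¹ + e^{v²}, 2]]` of the generalized Frobenius manifold
with potential `F = ½(v¹)²v² + v¹e^{v²} + ½(v¹)² log v¹`. -/
theorem dispersionless_P2_intersection_form
    (u1 u2 : ℝ → ℝ) (hu1 : ContDiff ℝ (⊤ : ℕ∞) u1) (hu2 : ContDiff ℝ (⊤ : ℕ∞) u2)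
    (hu2pos : ∀ x : ℝ, u2 x > 0)
    (v1 v2 : ℝ → ℝ)
    (hv1 : ∀ x : ℝ, v1 x = u2 x - u1 x) (hv2 : ∀ x : ℝ, v2 x = Real.log (u2 x))
    (ξ1 ξ2 : ℝ → ℝ) (hξ1 : ContDiff ℝ (⊤ : ℕ∞) ξ1) (hξ2 : ContDiff ℝ (⊤ : ℕ∞) ξ2) :
    (Kop u2 ∘ P20 u1 u2 ∘ KopT u2) (ξ1, ξ2) =
      (fun x => 2 * v1 x * Real.exp (v2 x) * deriv ξ1 x
          + deriv (fun y => v1 y * Real.exp (v2 y)) x * ξ1 x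
          + (v1 x + Real.exp (v2 x)) * deriv ξ2 x,
       fun x => (v1 x + Real.exp (v2 x)) * deriv ξ1 x
          + deriv (fun y => v1 y + Real.exp (v2 y)) x * ξ1 x
          + 2 * deriv ξ2 x) := by

  have hu2ne : ∀ x : ℝ, u2 x ≠ 0 := fun x => ne_of_gt (hu2pos x)
  have d1 : Differentiable ℝ u1 := hu1.differentiable (by simp)
  have d2 : Differentiable ℝ u2 := hu2.differentiable (by simp)
  have dξ1 : Differentiable ℝ ξ1 := hξ1.differentiable (by simp)
  have dξ2 : Differentiable ℝ ξ2 := hξ2.differentiable (by simp)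
  simp only [Function.comp, Kop, P20, KopT]
  have key2 : ∀ x : ℝ, deriv (fun y => u2 y * (ξ1 y + ξ2 y / u2 y)) x
      = deriv u2 x * ξ1 x + u2 x * deriv ξ1 x + deriv ξ2 x := by
    intro x
    have : (fun y => u2 y * (ξ1 y + ξ2 y / u2 y)) = fun y => u2 y * ξ1 y + ξ2 y := by
      funext y; rw [mul_add, mul_div_cancel₀ _ (hu2ne y)]
    rw [this, deriv_fun_add ((d2 x).fun_mul (dξ1 x)) (dξ2 x), deriv_fun_mul (d2 x) (dξ1 x)]
  have key1 : ∀ x : ℝ, deriv (fun y => u1 y * -ξ1 y) x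
      = -(deriv u1 x * ξ1 x + u1 x * deriv ξ1 x) := by
    intro x
    rw [deriv_fun_mul (d1 x) (dξ1 x).fun_neg, deriv.fun_neg]
    ring
  have keyv1 : ∀ x : ℝ, deriv (fun y => v1 y * Real.exp (v2 y)) x
      = deriv u2 x * u2 x + u2 x * deriv u2 x - (deriv u1 x * u2 x + u1 x * deriv u2 x) := by
    intro x
    have h : (fun y => v1 y * Real.exp (v2 y)) = fun y => (u2 y - u1 y) * u2 y := by
      funext y; rw [hv1, hv2, Real.exp_log (hu2pos y)]
    rw [h, deriv_fun_mul ((d2 x).fun_sub (d1 x)) (d2 x), deriv_fun_sub (d2 x) (d1 x)]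
    ring
  have keyv2 : ∀ x : ℝ, deriv (fun y => v1 y + Real.exp (v2 y)) x
      = deriv u2 x - deriv u1 x + deriv u2 x := by
    intro x
    have h : (fun y => v1 y + Real.exp (v2 y)) = fun y => (u2 y - u1 y) + u2 y := by
      funext y; rw [hv1, hv2, Real.exp_log (hu2pos y)]
    rw [h, deriv_fun_add ((d2 x).fun_sub (d1 x)) (d2 x), deriv_fun_sub (d2 x) (d1 x)]
  refine Prod.ext ?_ ?_ <;> funext x <;>
      simp only [key1, key2, keyv1, keyv2, hv1 x, hv2 x, Real.exp_log (hu2pos x)]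
  · ring
  · rw [div_eq_iff (hu2ne x)]; ring
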